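/- Let G^{(k)} ⊂ ℕ^{2k+1} be the multi-index sets with G^{(1)} = {(1,0,0),(0,1,0),(0,0,1)} and G^{(k)} = {α ∈ ℕ^{2k+1} : |α|=1} + G^{(k-1)}×{0}×{0}. Then for every k ≥ 1, ∑_{α ∈ G^{(k)}} ∏_{j=1}^{2k+1} α_j! ≤ (2(2k+1))^k. -/

import Mathlib

def unitL (n : ℕ) : Finset (List ℕ) :=
  (Finset.range n).image fun j => (List.range n).map fun i => if i = j then 1 else 0

def Gset : ℕ → Finset (List ℕ)
  | 0 => ∅
  | 1 => {[1, 0, 0], [0, 1, 0], [0, 0, 1]}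
  | (n + 2) => ((unitL (2 * (n + 2) + 1)) ×ˢ ((Gset (n + 1)).image fun a => a ++ [0, 0])).image
      fun p => List.zipWith (· + ·) p.1 p.2

lemma zip_rep : ∀ (l : List ℕ), List.zipWith (·+·) (List.replicate l.length 0) l = l
  | [] => rfl
  | a :: l => by simp [List.replicate_succ, zip_rep l]

lemma getD_sum : ∀ (l : List ℕ), ∑ i ∈ Finset.range l.length, l.getD i 0 = l.sum
  | [] => by simp
  | a :: l => by
    rw [List.length_cons, Finset.sum_range_succ']
    simp only [List.getD_cons_succ, List.getD_cons_zero]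
    rw [getD_sum l, List.sum_cons, Nat.add_comm]

lemma unit_eq (n j : ℕ) (hj : j < n) :
    ((List.range n).map fun i => if i = j then 1 else 0) =
      List.replicate j (0:ℕ) ++ 1 :: List.replicate (n - j - 1) 0 := by
  apply List.ext_getElem
  · simp; omega
  intro i h1 h2
  simp only [List.getElem_map, List.getElem_range, List.getElem_append,
    List.getElem_replicate, List.length_replicate, List.getElem_cons]
  split_ifs <;> omega

lemma zip_rep' (m : ℕ) (l : List ℕ) (hm : m = l.length) :
    List.zipWith (·+·) (List.replicate m 0) l = l := by
  subst hm; exact zip_rep l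

lemma zip_unit (n j : ℕ) (hj : j < n) (β : List ℕ) (hβ : β.length = n) :
    List.zipWith (·+·) ((List.range n).map fun i => if i = j then 1 else 0) β
      = β.take j ++ (β.getD j 0 + 1) :: β.drop (j+1) := by
  rw [unit_eq n j hj]
  conv_lhs => rw [← List.take_append_drop j β]
  rw [List.zipWith_append (by simp; omega)]
  rw [zip_rep' j (β.take j) (by simp; omega)]
  rw [List.drop_eq_getElem_cons (by omega)]
  simp only [List.zipWith_cons_cons]
  rw [zip_rep' (n-j-1) (β.drop (j+1)) (by simp; omega)]
  rw [List.getD_eq_getElem β 0 (by omega), Nat.add_comm 1]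

lemma eq_take_append (j : ℕ) (β : List ℕ) (hj : j < β.length) :
    β = β.take j ++ β.getD j 0 :: β.drop (j+1) := by
  conv_lhs => rw [← List.take_append_drop j β]
  rw [List.drop_eq_getElem_cons hj, List.getD_eq_getElem β 0 hj]

lemma prod_aux (t d : List ℕ) (g : ℕ) :
    ((t ++ (g+1) :: d).map Nat.factorial).prod
      = (g+1) * ((t ++ g :: d).map Nat.factorial).prod := by
  simp [Nat.factorial_succ]; ring

lemma sum_aux (t d : List ℕ) (g : ℕ) :
    (t ++ (g+1) :: d).sum = (t ++ g :: d).sum + 1 := by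
  simp; ring

lemma prodFact_zip_unit (n j : ℕ) (hj : j < n) (β : List ℕ) (hβ : β.length = n) :
    ((List.zipWith (·+·) ((List.range n).map fun i => if i = j then 1 else 0) β).map
        Nat.factorial).prod = (β.getD j 0 + 1) * (β.map Nat.factorial).prod := by
  rw [zip_unit n j hj β hβ]
  rw [show β.map Nat.factorial
      = (β.take j ++ β.getD j 0 :: β.drop (j+1)).map Nat.factorial from by
    rw [← eq_take_append j β (by omega)]]
  exact prod_aux _ _ _

lemma sum_zip_unit (n j : ℕ) (hj : j < n) (β : List ℕ) (hβ : β.length = n) :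
    (List.zipWith (·+·) ((List.range n).map fun i => if i = j then 1 else 0) β).sum
      = β.sum + 1 := by
  rw [zip_unit n j hj β hβ]
  rw [show β.sum = (β.take j ++ β.getD j 0 :: β.drop (j+1)).sum from by
    rw [← eq_take_append j β (by omega)]]
  exact sum_aux _ _ _

lemma len_zip_unit (n j : ℕ) (β : List ℕ) (hβ : β.length = n) :
    (List.zipWith (·+·) ((List.range n).map fun i => if i = j then 1 else 0) β).length = n := by
  simp [hβ]

lemma Gset_spec : ∀ k, 1 ≤ k → ∀ α ∈ Gset k, α.length = 2 * k + 1 ∧ α.sum = k := by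
  intro k hk
  induction k, hk using Nat.le_induction with
  | base => intro α hα; fin_cases hα <;> simp
  | succ k hk ih =>
    obtain ⟨m, rfl⟩ : ∃ m, k = m + 1 := ⟨k - 1, by omega⟩
    intro α hα
    rw [show m + 1 + 1 = m + 2 from rfl, Gset] at hα
    simp only [Finset.mem_image, Finset.mem_product, Finset.mem_range, unitL] at hα
    obtain ⟨⟨e, b⟩, ⟨⟨he, hb⟩, rfl⟩⟩ := hα
    simp only [Finset.mem_image, Finset.mem_range] at he hb
    obtain ⟨j, hj, rfl⟩ := he
    obtain ⟨β, hβ, rfl⟩ := hb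
    obtain ⟨hlen, hsum⟩ := ih β hβ
    have hγ : (β ++ [0, 0]).length = 2 * (m + 2) + 1 := by simp [hlen]; ring
    constructor
    · rw [len_zip_unit _ j _ hγ]
    · rw [sum_zip_unit _ j hj _ hγ]; simp [hsum]

lemma sum_image_le {α β : Type*} [DecidableEq β] (s : Finset α) (f : α → β) (g : β → ℕ) :
    ∑ y ∈ s.image f, g y ≤ ∑ x ∈ s, g (f x) := by
  conv_rhs => rw [Finset.sum_comp]
  apply Finset.sum_le_sum
  intro y hy
  have h1 : 0 < (s.filter fun x => f x = y).card := by
    rw [Finset.card_pos]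
    obtain ⟨x, hx, hfx⟩ := Finset.mem_image.mp hy
    exact ⟨x, Finset.mem_filter.mpr ⟨hx, hfx⟩⟩
  calc g y = 1 * g y := (one_mul _).symm
    _ ≤ (s.filter fun x => f x = y).card • g y := by
        rw [smul_eq_mul]; exact Nat.mul_le_mul_right _ h1

lemma unit_inj (n j j' : ℕ) (hj : j < n)
    (h : ((List.range n).map fun i => if i = j then 1 else 0)
       = (List.range n).map fun i => if i = j' then 1 else 0) : j = j' := by
  have h2 := List.getElem_of_eq h (show j < _ by simpa using hj)
  simp only [List.getElem_map, List.getElem_range, if_pos rfl] at h2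
  by_contra hne
  rw [if_neg hne] at h2
  exact absurd h2 one_ne_zero

theorem Gset_sum_factorial_le (k : ℕ) (hk : 1 ≤ k) :
    ∑ α ∈ Gset k, (α.map Nat.factorial).prod ≤ (2 * (2 * k + 1)) ^ k := by
  induction k, hk using Nat.le_induction with
  | base => decide
  | succ k hk ih =>
    obtain ⟨m, rfl⟩ : ∃ m, k = m + 1 := ⟨k - 1, by omega⟩
    rw [show m + 1 + 1 = m + 2 from rfl, Gset]
    refine le_trans (sum_image_le _ _ _) ?_
    rw [Finset.sum_product]
    rw [unitL, Finset.sum_image (fun x hx y hy h =>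
      unit_inj _ x y (Finset.mem_range.mp hx) h)]
    have hA : ∀ j ∈ Finset.range (2*(m+2)+1),
        (∑ b ∈ (Gset (m+1)).image (fun a => a ++ [0,0]),
          ((List.zipWith (·+·) ((List.range (2*(m+2)+1)).map
            fun i => if i = j then 1 else 0) b).map Nat.factorial).prod)
        = ∑ β ∈ Gset (m+1), (((β ++ [0,0]).getD j 0) + 1) * ((β.map Nat.factorial).prod) := by
      intro j hj
      rw [Finset.sum_image (by intro a _ b _ h; simpa using h)]
      apply Finset.sum_congr rfl
      intro β hβ
      have hlen : (β ++ [0,0]).length = 2*(m+2)+1 := by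
        have := (Gset_spec (m+1) (by omega) β hβ).1
        simp [this]; ring
      rw [prodFact_zip_unit _ j (Finset.mem_range.mp hj) _ hlen]
      simp [Nat.factorial]
    rw [Finset.sum_congr rfl hA, Finset.sum_comm]
    have hB : ∀ β ∈ Gset (m+1),
        (∑ j ∈ Finset.range (2*(m+2)+1),
          (((β ++ [0,0]).getD j 0) + 1) * ((β.map Nat.factorial).prod))
        = 3 * (m + 2) * (β.map Nat.factorial).prod := by
      intro β hβ
      obtain ⟨hlen, hsum⟩ := Gset_spec (m+1) (by omega) β hβ
      rw [← Finset.sum_mul]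
      congr 1
      have hlen2 : (β ++ [0,0]).length = 2*(m+2)+1 := by simp [hlen]; ring
      rw [Finset.sum_add_distrib, Finset.sum_const, Finset.card_range,
        show (2*(m+2)+1) = (β ++ [0,0]).length from hlen2.symm, getD_sum]
      simp [hsum, hlen2]
      omega
    rw [Finset.sum_congr rfl hB, ← Finset.mul_sum]
    calc 3*(m+2) * ∑ β ∈ Gset (m+1), (β.map Nat.factorial).prod
        ≤ 3*(m+2) * (2*(2*(m+1)+1))^(m+1) := Nat.mul_le_mul_left _ ih
      _ ≤ (2*(2*(m+2)+1)) * (2*(2*(m+2)+1))^(m+1) :=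
          Nat.mul_le_mul (by omega) (Nat.pow_le_pow_left (by omega) _)
      _ = (2*(2*(m+2)+1))^(m+2) := by rw [← pow_succ']
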